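/- For $k \ge 1$, the difference $N_{(1,1,1)}(k) - N_{(1,1,1)}(k-1)$ equals $\sum_{\lambda_1=k-1}^{\lfloor (3k-2)/2 \rfloor} (3k - 2\lambda_1 - 1)(\lambda_1+1) + \sum_{\lambda_0=1}^{\lfloor (k-1)/2 \rfloor} (\lambda_0 + k + 1)(k - 2\lambda_0)$. -/

import Mathlib

/-- `N_{(1,1,1)}(k)`: the sum of `(λ₂-λ₁+1)(λ₁-λ₀+1)` over integer triples
`0 ≤ λ₀ ≤ λ₁ ≤ λ₂ ≤ 2k-1` with `λ₀+λ₁+λ₂ = 3k-2`. -/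
noncomputable def N111 (k : ℤ) : ℤ :=
  ∑ t ∈ (((Finset.Icc (0:ℤ) (2*k-1)) ×ˢ (Finset.Icc (0:ℤ) (2*k-1)) ×ˢ
      (Finset.Icc (0:ℤ) (2*k-1))).filter
      (fun t => t.1 ≤ t.2.1 ∧ t.2.1 ≤ t.2.2 ∧ t.1 + t.2.1 + t.2.2 = 3*k-2)),
    (t.2.2 - t.2.1 + 1) * (t.2.1 - t.1 + 1)

/-- for `k ≥ 1`,
`N_{(1,1,1)}(k) - N_{(1,1,1)}(k-1)
  = ∑_{λ₁=k-1}^{⌊(3k-2)/2⌋} (3k-2λ₁-1)(λ₁+1)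
  + ∑_{λ₀=1}^{⌊(k-1)/2⌋} (λ₀+k+1)(k-2λ₀)`. -/
theorem stmt3 (k : ℤ) (hk : 1 ≤ k) :
    N111 k - N111 (k-1)
      = (∑ l ∈ Finset.Icc (k-1) ((3*k-2)/2), (3*k - 2*l - 1) * (l + 1)) +
        (∑ l ∈ Finset.Icc (1 : ℤ) ((k-1)/2), (l + k + 1) * (k - 2*l)) := by
  classical
  set S : Finset (ℤ × ℤ × ℤ) :=
    (((Finset.Icc (0:ℤ) (2*k-1)) ×ˢ (Finset.Icc (0:ℤ) (2*k-1)) ×ˢ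
      (Finset.Icc (0:ℤ) (2*k-1))).filter
      (fun t => t.1 ≤ t.2.1 ∧ t.2.1 ≤ t.2.2 ∧ t.1 + t.2.1 + t.2.2 = 3*k-2)) with hS
  set f : ℤ × ℤ × ℤ → ℤ := fun t => (t.2.2 - t.2.1 + 1) * (t.2.1 - t.1 + 1) with hf
  have hmem : ∀ t : ℤ × ℤ × ℤ, t ∈ S ↔
      (0 ≤ t.1 ∧ t.1 ≤ t.2.1 ∧ t.2.1 ≤ t.2.2 ∧ t.2.2 ≤ 2*k-1 ∧
        t.1 + t.2.1 + t.2.2 = 3*k-2) := by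
    intro t
    simp only [hS, Finset.mem_filter, Finset.mem_product, Finset.mem_Icc]
    omega
  -- Step 1: N111 (k-1) = sum over the shifted part of S
  have h1 : N111 (k-1) = ∑ t ∈ S.filter (fun t => 1 ≤ t.1 ∧ t.2.2 ≤ 2*k-2), f t := by
    rw [N111]
    refine Finset.sum_nbij' (fun t => (t.1 + 1, t.2.1 + 1, t.2.2 + 1))
      (fun t => (t.1 - 1, t.2.1 - 1, t.2.2 - 1)) ?_ ?_ ?_ ?_ ?_
    · intro a ha
      simp only [Finset.mem_filter, Finset.mem_product, Finset.mem_Icc] at ha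
      simp only [Finset.mem_filter, hmem]
      try dsimp only
      omega
    · intro b hb
      simp only [Finset.mem_filter, hmem] at hb
      simp only [Finset.mem_filter, Finset.mem_product, Finset.mem_Icc]
      try dsimp only
      omega
    · rintro ⟨a1, a2, a3⟩ _
      simp only [Prod.mk.injEq, and_true, true_and]
      omega
    · rintro ⟨a1, a2, a3⟩ _
      simp only [Prod.mk.injEq, and_true, true_and]
      omega
    · rintro ⟨a1, a2, a3⟩ _
      simp only [hf]
      ring
  -- Step 2: split N111 k
  have h2 : N111 k = (∑ t ∈ S.filter (fun t => 1 ≤ t.1 ∧ t.2.2 ≤ 2*k-2), f t)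
      + ∑ t ∈ S.filter (fun t => ¬(1 ≤ t.1 ∧ t.2.2 ≤ 2*k-2)), f t := by
    rw [N111, ← hS, ← hf, Finset.sum_filter_add_sum_filter_not]
  have key : N111 k - N111 (k-1)
      = ∑ t ∈ S.filter (fun t => ¬(1 ≤ t.1 ∧ t.2.2 ≤ 2*k-2)), f t := by
    rw [h1, h2]; ring
  -- Step 3: inclusion-exclusion
  set A : Finset (ℤ × ℤ × ℤ) := S.filter (fun t => t.1 = 0) with hA
  set B : Finset (ℤ × ℤ × ℤ) := S.filter (fun t => t.2.2 = 2*k-1) with hB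
  have hunion : S.filter (fun t => ¬(1 ≤ t.1 ∧ t.2.2 ≤ 2*k-2)) = A ∪ B := by
    ext t
    simp only [hA, hB, Finset.mem_union, Finset.mem_filter, hmem]
    omega
  have hinter : A ∩ B = {((0 : ℤ), (k-1 : ℤ), (2*k-1 : ℤ))} := by
    ext t
    obtain ⟨t1, t2, t3⟩ := t
    simp only [hA, hB, Finset.mem_inter, Finset.mem_filter, Finset.mem_singleton,
      hmem, Prod.mk.injEq]
    try dsimp only
    omega
  have hsum : ∑ t ∈ A ∪ B, f t = (∑ t ∈ A, f t) + (∑ t ∈ B, f t) - ∑ t ∈ A ∩ B, f t := by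
    have h : (∑ t ∈ A ∪ B, f t) + ∑ t ∈ A ∩ B, f t
        = (∑ t ∈ A, f t) + ∑ t ∈ B, f t := Finset.sum_union_inter
    linarith
  -- Sum over A
  have hAsum : ∑ t ∈ A, f t
      = ∑ l ∈ Finset.Icc (k-1) ((3*k-2)/2), (3*k - 2*l - 1) * (l + 1) := by
    refine Finset.sum_nbij' (fun t => t.2.1) (fun l => ((0:ℤ), l, 3*k-2-l)) ?_ ?_ ?_ ?_ ?_
    · intro a ha
      simp only [hA, Finset.mem_filter, hmem] at ha
      simp only [Finset.mem_Icc]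
      omega
    · intro l hl
      simp only [Finset.mem_Icc] at hl
      simp only [hA, Finset.mem_filter, hmem, and_true, true_and]
      try dsimp only
      omega
    · rintro ⟨a1, a2, a3⟩ ha
      simp only [hA, Finset.mem_filter, hmem] at ha
      simp only [Prod.mk.injEq, and_true, true_and]
      try dsimp only at ha ⊢
      omega
    · intro l _
      rfl
    · rintro ⟨a1, a2, a3⟩ ha
      simp only [hA, Finset.mem_filter, hmem] at ha
      try dsimp only at ha
      obtain ⟨⟨_, _, _, _, h5⟩, h6⟩ := ha
      have h7 : a3 = 3*k - 2 - a2 := by omega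
      simp only [hf]
      try dsimp only
      rw [h6, h7]
      ring
  -- Sum over B
  have hBsum : ∑ t ∈ B, f t
      = ∑ l ∈ Finset.Icc (0:ℤ) ((k-1)/2), (l + k + 1) * (k - 2*l) := by
    refine Finset.sum_nbij' (fun t => t.1) (fun l => (l, k-1-l, 2*k-1)) ?_ ?_ ?_ ?_ ?_
    · intro a ha
      simp only [hB, Finset.mem_filter, hmem] at ha
      simp only [Finset.mem_Icc]
      omega
    · intro l hl
      simp only [Finset.mem_Icc] at hl
      simp only [hB, Finset.mem_filter, hmem, and_true, true_and]
      try dsimp only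
      omega
    · rintro ⟨a1, a2, a3⟩ ha
      simp only [hB, Finset.mem_filter, hmem] at ha
      simp only [Prod.mk.injEq, and_true, true_and]
      try dsimp only at ha ⊢
      omega
    · intro l _
      rfl
    · rintro ⟨a1, a2, a3⟩ ha
      simp only [hB, Finset.mem_filter, hmem] at ha
      try dsimp only at ha
      obtain ⟨⟨_, _, _, _, h5⟩, h6⟩ := ha
      have h7 : a2 = k - 1 - a1 := by omega
      simp only [hf]
      try dsimp only
      rw [h6, h7]
      ring
  -- Peel off l = 0 from the B sum
  have hB0 : (∑ l ∈ Finset.Icc (0:ℤ) ((k-1)/2), (l + k + 1) * (k - 2*l))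
      = (k + 1) * k + ∑ l ∈ Finset.Icc (1:ℤ) ((k-1)/2), (l + k + 1) * (k - 2*l) := by
    have h0 : Finset.Icc (0:ℤ) ((k-1)/2) = insert 0 (Finset.Icc 1 ((k-1)/2)) := by
      ext x; simp only [Finset.mem_Icc, Finset.mem_insert]; omega
    rw [h0, Finset.sum_insert (by simp)]
    ring_nf
  have hIsum : ∑ t ∈ A ∩ B, f t = (k + 1) * k := by
    rw [hinter, Finset.sum_singleton]
    simp only [hf]
    ring
  rw [key, hunion, hsum, hAsum, hBsum, hB0, hIsum]
  ring
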